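/- Let n ≥ 1 be an integer, h > 0, and T₁, …, T_n nonnegative real numbers; define Q := Σ_{j=1}^{n} (j/n)·T_j^{n/j}·(2(n−j))^{(n−j)/j}, with the convention 0⁰ = 1 (so the j = n summand equals T_n), and assume Q > 0. Let a₁, …, a_n : ℂ → ℂ satisfy |a_j(z)| ≤ T_j·e^{−j·h·Re z} for every z ∈ ℂ with Re z < 0 and every j, and define D(z) := z^n − Σ_{j=1}^{n} z^{n−j}·a_j(z). If z ∈ ℂ satisfies Re z < 0 and h·(−Re z) < log(|z|) − (1/n)·log(2Q), then D(z) ≠ 0. -/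

import Mathlib

private lemma young_aux (n j : ℕ) (hj1 : 1 ≤ j) (hjn : j < n) (Tj u : ℝ)
    (hT : 0 ≤ Tj) (hu : 0 < u) :
    Tj * u ^ j ≤ ((j : ℝ) / (n : ℝ)) * Tj ^ ((n : ℝ) / (j : ℝ)) *
      (2 * ((n : ℝ) - (j : ℝ))) ^ (((n : ℝ) - (j : ℝ)) / (j : ℝ)) * u ^ n +
      1 / (2 * (n : ℝ)) := by
  have hjp : (0:ℝ) < (j:ℝ) := by exact_mod_cast hj1
  have hjn' : (j:ℝ) < (n:ℝ) := by exact_mod_cast hjn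
  have hnp : (0:ℝ) < (n:ℝ) := lt_trans hjp hjn'
  have hd : (0:ℝ) < (n:ℝ) - (j:ℝ) := by linarith
  set A : ℝ := 2 * ((n:ℝ) - (j:ℝ)) with hA
  have hApos : 0 < A := by positivity
  set w₁ : ℝ := (j:ℝ) / (n:ℝ) with hw₁def
  set w₂ : ℝ := ((n:ℝ) - (j:ℝ)) / (n:ℝ) with hw₂def
  set p₁ : ℝ := Tj ^ ((n:ℝ)/(j:ℝ)) * A ^ (((n:ℝ)-(j:ℝ))/(j:ℝ)) * u ^ n with hp₁
  set p₂ : ℝ := 1 / A with hp₂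
  have hw₁ : 0 ≤ w₁ := by positivity
  have hw₂ : 0 ≤ w₂ := by positivity
  have hp₁0 : 0 ≤ p₁ := by positivity
  have hp₂0 : 0 ≤ p₂ := by positivity
  have hw : w₁ + w₂ = 1 := by rw [hw₁def, hw₂def]; field_simp; ring
  have key := Real.geom_mean_le_arith_mean2_weighted hw₁ hw₂ hp₁0 hp₂0 hw
  have f1 : (Tj ^ ((n:ℝ)/(j:ℝ))) ^ w₁ = Tj := by
    rw [← Real.rpow_mul hT]
    have : (n:ℝ)/(j:ℝ) * w₁ = 1 := by rw [hw₁def]; field_simp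
    rw [this, Real.rpow_one]
  have f2 : (A ^ (((n:ℝ)-(j:ℝ))/(j:ℝ))) ^ w₁ = A ^ w₂ := by
    rw [← Real.rpow_mul hApos.le]
    congr 1
    rw [hw₁def, hw₂def]
    field_simp
  have f3 : ((u ^ n : ℝ)) ^ w₁ = u ^ j := by
    rw [← Real.rpow_natCast u n, ← Real.rpow_mul hu.le]
    have : (n:ℝ) * w₁ = (j:ℝ) := by rw [hw₁def]; field_simp
    rw [this, Real.rpow_natCast]
  have f4 : p₂ ^ w₂ = (A ^ w₂)⁻¹ := by
    rw [hp₂, one_div, Real.inv_rpow hApos.le]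
  have hAne : A ^ w₂ ≠ 0 := by positivity
  have lhs : p₁ ^ w₁ * p₂ ^ w₂ = Tj * u ^ j := by
    rw [hp₁, Real.mul_rpow (by positivity) (by positivity),
      Real.mul_rpow (by positivity) (by positivity), f1, f2, f3, f4]
    field_simp
  have rhs2 : w₂ * p₂ = 1 / (2 * (n:ℝ)) := by
    rw [hp₂, hw₂def, hA]
    field_simp
  rw [lhs, rhs2] at key
  calc Tj * u ^ j ≤ w₁ * p₁ + 1 / (2 * (n:ℝ)) := key
    _ = (j:ℝ)/(n:ℝ) * Tj ^ ((n:ℝ)/(j:ℝ)) * A ^ (((n:ℝ)-(j:ℝ))/(j:ℝ)) * u ^ n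
        + 1/(2*(n:ℝ)) := by rw [hp₁, hw₁def]; ring

/-- The non-vanishing criterion of the proof of Corollary 4.8 of the paper:
if `Re z < 0` and `h·(−Re z) < log |z| − (1/n) log (2Q)` then `D(z) ≠ 0`. -/
theorem characteristic_nonvanishing (n : ℕ) (hn : 1 ≤ n) (h : ℝ) (hh : 0 < h)
    (T : ℕ → ℝ) (hT : ∀ j, 0 ≤ T j)
    (Q : ℝ)
    (hQ : Q = ∑ j ∈ Finset.Icc 1 n, ((j : ℝ) / (n : ℝ)) *
      (T j) ^ ((n : ℝ) / (j : ℝ)) *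
      (2 * ((n : ℝ) - (j : ℝ))) ^ (((n : ℝ) - (j : ℝ)) / (j : ℝ)))
    (hQpos : 0 < Q)
    (a : ℕ → ℂ → ℂ)
    (ha : ∀ j ∈ Finset.Icc 1 n, ∀ z : ℂ, z.re < 0 →
      ‖a j z‖ ≤ T j * Real.exp (-(j : ℝ) * h * z.re))
    (D : ℂ → ℂ)
    (hD : ∀ z : ℂ, D z = z ^ n - ∑ j ∈ Finset.Icc 1 n, z ^ (n - j) * a j z) :
    ∀ z : ℂ, z.re < 0 →
      h * (-z.re) < Real.log ‖z‖ - (1 / (n : ℝ)) * Real.log (2 * Q) →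
      D z ≠ 0 := by
  intro z hre hlt hzero
  have hnp : (0:ℝ) < (n:ℝ) := by positivity
  have hz : z ≠ 0 := by
    intro hz0; rw [hz0] at hre; simp at hre
  set r : ℝ := ‖z‖ with hr
  have hrpos : 0 < r := norm_pos_iff.mpr hz
  have h2Q : (0:ℝ) < 2 * Q := by linarith
  set s : ℝ := (2 * Q) ^ ((n:ℝ)⁻¹) with hs_def
  have hs : 0 < s := Real.rpow_pos_of_pos h2Q _
  have hsn : s ^ n = 2 * Q := by
    rw [hs_def, ← Real.rpow_natCast ((2*Q) ^ ((n:ℝ)⁻¹)) n, ← Real.rpow_mul h2Q.le,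
      inv_mul_cancel₀ (by positivity : (n:ℝ) ≠ 0), Real.rpow_one]
  have hE : Real.exp (h * (-z.re)) < r / s := by
    have h1 : Real.exp (h * (-z.re)) <
        Real.exp (Real.log r - (1/(n:ℝ)) * Real.log (2*Q)) := Real.exp_lt_exp.mpr hlt
    have h2 : Real.exp (Real.log r - (1/(n:ℝ)) * Real.log (2*Q)) = r / s := by
      rw [Real.exp_sub, Real.exp_log hrpos, hs_def, Real.rpow_def_of_pos h2Q]
      ring_nf
    rwa [h2] at h1
  -- from D z = 0
  have hzn : z ^ n = ∑ j ∈ Finset.Icc 1 n, z ^ (n - j) * a j z := by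
    have h0 : z ^ n - ∑ j ∈ Finset.Icc 1 n, z ^ (n - j) * a j z = 0 := by
      rw [← hD z, hzero]
    exact sub_eq_zero.mp h0
  -- triangle inequality
  have htri : r ^ n ≤ ∑ j ∈ Finset.Icc 1 n,
      r ^ (n - j) * (T j * Real.exp (-(j:ℝ) * h * z.re)) := by
    calc r ^ n = ‖z ^ n‖ := by rw [norm_pow]
      _ = ‖∑ j ∈ Finset.Icc 1 n, z ^ (n - j) * a j z‖ := by rw [hzn]
      _ ≤ ∑ j ∈ Finset.Icc 1 n, ‖z ^ (n - j) * a j z‖ :=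
          norm_sum_le _ _
      _ ≤ ∑ j ∈ Finset.Icc 1 n, r ^ (n - j) * (T j * Real.exp (-(j:ℝ) * h * z.re)) := by
          apply Finset.sum_le_sum
          intro j hj
          rw [norm_mul, norm_pow]
          exact mul_le_mul_of_nonneg_left (ha j hj z hre) (by positivity)
  -- each term bound
  have hterm : ∀ j ∈ Finset.Icc 1 n,
      r ^ (n - j) * (T j * Real.exp (-(j:ℝ) * h * z.re)) ≤
      r ^ n * (T j * (1/s) ^ j) := by
    intro j hj
    obtain ⟨hj1, hjn⟩ := Finset.mem_Icc.mp hj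
    have hexp : Real.exp (-(j:ℝ) * h * z.re) = Real.exp (h * (-z.re)) ^ j := by
      rw [← Real.exp_nat_mul]
      ring_nf
    have hpow : Real.exp (h * (-z.re)) ^ j ≤ (r/s) ^ j :=
      pow_le_pow_left₀ (Real.exp_nonneg _) hE.le j
    have hrn : r ^ (n - j) * r ^ j = r ^ n := by
      rw [← pow_add, Nat.sub_add_cancel hjn]
    calc r ^ (n - j) * (T j * Real.exp (-(j:ℝ) * h * z.re))
        = (r ^ (n - j) * T j) * Real.exp (h * (-z.re)) ^ j := by rw [hexp]; ring
      _ ≤ (r ^ (n - j) * T j) * (r/s) ^ j := by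
          apply mul_le_mul_of_nonneg_left hpow
          have := hT j
          positivity
      _ = (r ^ (n - j) * r ^ j) * (T j * (1/s) ^ j) := by
          rw [div_pow, div_pow, one_pow]
          field_simp
      _ = r ^ n * (T j * (1/s) ^ j) := by rw [hrn]
  -- Young bound on each coefficient term
  have hyoung : ∀ j ∈ Finset.Icc 1 n, T j * (1/s) ^ j ≤
      ((j : ℝ) / (n : ℝ)) * (T j) ^ ((n : ℝ) / (j : ℝ)) *
        (2 * ((n : ℝ) - (j : ℝ))) ^ (((n : ℝ) - (j : ℝ)) / (j : ℝ)) * (1/s) ^ n +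
      (1 / (2 * (n:ℝ)) - if j = n then 1 / (2 * (n:ℝ)) else 0) := by
    intro j hj
    obtain ⟨hj1, hjn⟩ := Finset.mem_Icc.mp hj
    rcases eq_or_lt_of_le hjn with heq | hlt'
    · subst heq
      rw [if_pos rfl]
      simp only [sub_self, zero_div, Real.rpow_zero, mul_one,
        div_self (ne_of_gt hnp), Real.rpow_one]
      linarith
    · have hy := young_aux n j hj1 hlt' (T j) (1/s) (hT j) (by positivity)
      rw [if_neg (Nat.ne_of_lt hlt'), sub_zero]
      exact hy
  -- sum the Young bounds
  have hsum : ∑ j ∈ Finset.Icc 1 n, T j * (1/s) ^ j ≤ 1 - 1 / (2 * (n:ℝ)) := by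
    have h1 : ∑ j ∈ Finset.Icc 1 n, T j * (1/s) ^ j ≤
        ∑ j ∈ Finset.Icc 1 n,
          (((j : ℝ) / (n : ℝ)) * (T j) ^ ((n : ℝ) / (j : ℝ)) *
            (2 * ((n : ℝ) - (j : ℝ))) ^ (((n : ℝ) - (j : ℝ)) / (j : ℝ)) * (1/s) ^ n +
          (1 / (2 * (n:ℝ)) - if j = n then 1 / (2 * (n:ℝ)) else 0)) :=
      Finset.sum_le_sum hyoung
    rw [Finset.sum_add_distrib, ← Finset.sum_mul, ← hQ] at h1
    have hsinv : (1/s : ℝ) ^ n = 1 / (2 * Q) := by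
      rw [div_pow, one_pow, hsn]
    rw [hsinv] at h1
    have hQterm : Q * (1 / (2 * Q)) = 1/2 := by field_simp
    rw [hQterm] at h1
    have hcard : (Finset.Icc 1 n).card = n := by
      rw [Nat.card_Icc]; omega
    have hsum2 : ∑ j ∈ Finset.Icc 1 n,
        (1 / (2 * (n:ℝ)) - if j = n then 1 / (2 * (n:ℝ)) else 0) =
        (n:ℝ) * (1 / (2 * (n:ℝ))) - 1 / (2 * (n:ℝ)) := by
      rw [Finset.sum_sub_distrib, Finset.sum_const, hcard, nsmul_eq_mul]
      congr 1
      rw [Finset.sum_ite_eq' (Finset.Icc 1 n) n (fun _ => 1 / (2 * (n:ℝ)))]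
      rw [if_pos (Finset.mem_Icc.mpr ⟨hn, le_refl n⟩)]
    rw [hsum2] at h1
    have : (n:ℝ) * (1 / (2 * (n:ℝ))) = 1/2 := by field_simp
    rw [this] at h1
    linarith
  -- conclude
  have hchain : r ^ n ≤ r ^ n * (1 - 1 / (2 * (n:ℝ))) := by
    calc r ^ n ≤ ∑ j ∈ Finset.Icc 1 n,
        r ^ (n - j) * (T j * Real.exp (-(j:ℝ) * h * z.re)) := htri
      _ ≤ ∑ j ∈ Finset.Icc 1 n, r ^ n * (T j * (1/s) ^ j) :=
          Finset.sum_le_sum hterm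
      _ = r ^ n * ∑ j ∈ Finset.Icc 1 n, T j * (1/s) ^ j := by
          rw [Finset.mul_sum]
      _ ≤ r ^ n * (1 - 1 / (2 * (n:ℝ))) := by
          apply mul_le_mul_of_nonneg_left hsum (by positivity)
  have hrn : 0 < r ^ n := pow_pos hrpos n
  have hpos : 0 < r ^ n * (1 / (2 * (n:ℝ))) := by positivity
  nlinarith
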